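/- arXiv:1809.08507 — 2 statements merged into one kernel-verified Lean document; each statement's English description precedes it below -/
import Mathlib

section
/- For each integer k ≥ 1, there exists an Eulerian orientation of the hypercube Q_{2k} that is strongly k-vertex-connected. -/
open Finset

variable {V : Type*} [Fintype V] [DecidableEq V]

/-- Out-degree of `v` in the digraph given by `D`. -/
def outDeg (D : V → V → Bool) (v : V) : ℕ :=
  (Finset.univ.filter (fun w => D v w = true)).card

/-- In-degree of `v` in the digraph given by `D`. -/
def inDeg (D : V → V → Bool) (v : V) : ℕ :=
  (Finset.univ.filter (fun w => D w v = true)).card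

/-- `D` is an orientation of the simple graph `G`: every arc of `D` is an edge of `G`,
and every edge of `G` receives exactly one of the two directions. -/
def IsOrientation (G : SimpleGraph V) (D : V → V → Bool) : Prop :=
  (∀ v w, D v w = true → G.Adj v w) ∧ ∀ v w, G.Adj v w → (D v w = true ↔ D w v = false)

/-- An Eulerian orientation: an orientation with in-degree equal to out-degree everywhere. -/
def IsEulerianOrientation (G : SimpleGraph V) (D : V → V → Bool) : Prop :=
  IsOrientation G D ∧ ∀ v, inDeg D v = outDeg D v

/-- Number of arcs of `D` going from `A` to `B`. -/
def arcs (D : V → V → Bool) (A B : Finset V) : ℕ :=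
  ((A ×ˢ B).filter (fun p => D p.1 p.2 = true)).card

/-- The digraph `D` is strongly connected on the vertex set `A`. -/
def StronglyConnectedOn (D : V → V → Bool) (A : Finset V) : Prop :=
  ∀ v ∈ A, ∀ w ∈ A,
    Relation.ReflTransGen (fun a b => a ∈ A ∧ b ∈ A ∧ D a b = true) v w

/-- The digraph `D` is strongly `k`-vertex-connected: it has at least `k+1` vertices and
deleting any set of at most `k-1` vertices leaves a strongly connected digraph. -/
def StronglyKConnected (k : ℕ) (D : V → V → Bool) : Prop :=
  k + 1 ≤ Fintype.card V ∧
    ∀ Z : Finset V, Z.card ≤ k - 1 → StronglyConnectedOn D (Finset.univ \ Z)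

/-- The `d`-dimensional hypercube graph on vertex set `Fin d → Bool`. -/
def cube (d : ℕ) : SimpleGraph (Fin d → Bool) where
  Adj v w := (Finset.univ.filter (fun i => v i ≠ w i)).card = 1
  symm := by
    constructor
    intro v w h
    have he : (Finset.univ.filter (fun i => w i ≠ v i))
        = (Finset.univ.filter (fun i => v i ≠ w i)) := by
      apply Finset.filter_congr; intro i _; simp [ne_comm]
    rw [he]; exact h
  loopless := by constructor; intro v h; simp at h

/-- Number of external neighbors of the vertex set `S` in `G`. -/
noncomputable def extNbrCard (G : SimpleGraph V) (S : Finset V) : ℕ :=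
  {w | w ∉ S ∧ ∃ v ∈ S, G.Adj v w}.ncard

/-- Harper's vertex-isoperimetric quantity `b_v(m, Q_{2k})`: the minimum number of external
neighbors over all vertex sets of size `m` in the hypercube `Q_{2k}`. -/
noncomputable def bv (k m : ℕ) : ℕ :=
  sInf {n | ∃ S : Finset (Fin (2 * k) → Bool), S.card = m ∧ extNbrCard (cube (2 * k)) S = n}

namespace Stmt3Aux


abbrev T (k : ℕ) := Fin k → ZMod 4

def Step {k : ℕ} (x y : T k) : Prop := ∃ j, y = Function.update x j (x j + 1)

def Reach {k : ℕ} (Z : Finset (T k)) (v w : T k) : Prop :=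
  Relation.ReflTransGen (fun a b => a ∉ Z ∧ b ∉ Z ∧ Step a b) v w

variable {k : ℕ}

def layerZ (Z : Finset (T (k+1))) (c : ZMod 4) : Finset (T k) :=
  (Z.filter (fun z => z (Fin.last k) = c)).image Fin.init

lemma mem_layerZ {Z : Finset (T (k+1))} {c : ZMod 4} {p : T k} :
    p ∈ layerZ Z c ↔ Fin.snoc p c ∈ Z := by
  constructor
  · rintro hp
    simp only [layerZ, Finset.mem_image, Finset.mem_filter] at hp
    obtain ⟨z, ⟨hz, hzc⟩, rfl⟩ := hp
    rwa [← hzc, Fin.snoc_init_self]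
  · intro h
    simp only [layerZ, Finset.mem_image, Finset.mem_filter]
    exact ⟨Fin.snoc p c, ⟨h, Fin.snoc_last _ _⟩, Fin.init_snoc _ _⟩

lemma card_layerZ (Z : Finset (T (k+1))) (c : ZMod 4) :
    (layerZ Z c).card = (Z.filter (fun z => z (Fin.last k) = c)).card := by
  apply Finset.card_image_of_injOn
  intro z hz z' hz' h
  simp only [Finset.coe_filter, Set.mem_setOf_eq] at hz hz'
  rw [← Fin.snoc_init_self z, ← Fin.snoc_init_self z', h, hz.2, hz'.2]

lemma card_layerZ_add_le (Z : Finset (T (k+1))) {c c' : ZMod 4} (h : c ≠ c') :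
    (layerZ Z c).card + (layerZ Z c').card ≤ Z.card := by
  rw [card_layerZ, card_layerZ]
  rw [← Finset.card_union_of_disjoint]
  · exact Finset.card_le_card (by
      intro z hz
      rcases Finset.mem_union.1 hz with h' | h' <;> exact (Finset.mem_filter.1 h').1)
  · rw [Finset.disjoint_left]
    intro z h1 h2
    rw [Finset.mem_filter] at h1 h2
    exact h (h1.2 ▸ h2.2)

lemma all_last_eq_of_bad {Z : Finset (T (k+1))} {c : ZMod 4} (hZ : Z.card ≤ k)
    (hbad : k ≤ (layerZ Z c).card) : ∀ z ∈ Z, z (Fin.last k) = c := by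
  have h1 : (Z.filter (fun z => z (Fin.last k) = c)) = Z := by
    apply Finset.eq_of_subset_of_card_le (Finset.filter_subset _ _)
    rw [← card_layerZ]; omega
  intro z hz
  rw [← h1] at hz
  exact (Finset.mem_filter.1 hz).2

lemma exists_avoid (Z : Finset (T (k+1))) (hZ : Z.card ≤ k) :
    ∃ u : T k, ∀ c : ZMod 4, Fin.snoc u c ∉ Z := by
  have hcard : (Z.image Fin.init).card < Fintype.card (T k) := by
    calc (Z.image Fin.init).card ≤ Z.card := Finset.card_image_le
    _ ≤ k := hZ
    _ < 4 ^ k := Nat.lt_pow_self (by norm_num : 1 < 4)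
    _ = Fintype.card (T k) := by simp [Fintype.card_fun]
  obtain ⟨u, hu⟩ : ∃ u : T k, u ∉ Z.image Fin.init := by
    by_contra h
    push_neg at h
    have : (Finset.univ : Finset (T k)) ⊆ Z.image Fin.init := fun u _ => h u
    have := Finset.card_le_card this
    rw [Finset.card_univ] at this
    omega
  refine ⟨u, fun c hc => hu ?_⟩
  exact Finset.mem_image.2 ⟨_, hc, Fin.init_snoc _ _⟩

section Reaching

variable {Z : Finset (T (k+1))}

lemma add_one_ne : ∀ a : ZMod 4, a + 1 ≠ a := by decide

lemma snoc_notMem {p : T k} {c : ZMod 4} (h : p ∉ layerZ Z c) : Fin.snoc p c ∉ Z :=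
  fun hc => h (mem_layerZ.2 hc)

lemma init_notMem {x : T (k+1)} {c : ZMod 4} (hx : x ∉ Z) (hc : x (Fin.last k) = c) :
    Fin.init x ∉ layerZ Z c := by
  intro h
  rw [mem_layerZ, ← hc, Fin.snoc_init_self] at h
  exact hx h

lemma reach_within
    (IH : ∀ Z' : Finset (T k), (Z'.card < k ∨ Z' = ∅) → ∀ v, v ∉ Z' → ∀ w, w ∉ Z' → Reach Z' v w)
    {c : ZMod 4} (hgood : (layerZ Z c).card < k ∨ layerZ Z c = ∅)
    (x y : T (k+1)) (hx : x ∉ Z) (hy : y ∉ Z)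
    (hxc : x (Fin.last k) = c) (hyc : y (Fin.last k) = c) : Reach Z x y := by
  have h0 := IH (layerZ Z c) hgood (Fin.init x) (init_notMem hx hxc)
    (Fin.init y) (init_notMem hy hyc)
  have h1 : Reach Z (Fin.snoc (Fin.init x) c) (Fin.snoc (Fin.init y) c) := by
    refine Relation.ReflTransGen.lift (fun p => (Fin.snoc p c : T (k+1))) ?_ _ _ h0
    rintro a b ⟨ha, hb, j, rfl⟩
    refine ⟨snoc_notMem ha, snoc_notMem hb, j.castSucc, ?_⟩
    simp only [Fin.snoc_update, Fin.snoc_castSucc]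
  have hx' : (Fin.snoc (Fin.init x) c : T (k+1)) = x := by
    rw [← hxc]; exact Fin.snoc_init_self x
  have hy' : (Fin.snoc (Fin.init y) c : T (k+1)) = y := by
    rw [← hyc]; exact Fin.snoc_init_self y
  rwa [hx', hy'] at h1

lemma cross_step {x : T (k+1)} (hx : x ∉ Z)
    (hx' : Function.update x (Fin.last k) (x (Fin.last k) + 1) ∉ Z) :
    Reach Z x (Function.update x (Fin.last k) (x (Fin.last k) + 1)) :=
  Relation.ReflTransGen.single ⟨hx, hx', Fin.last k, rfl⟩

lemma update_last_snoc {p : T k} {c v : ZMod 4} :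
    Function.update (Fin.snoc p c : T (k+1)) (Fin.last k) v = Fin.snoc p v := by
  rw [Fin.update_snoc_last]

lemma reach_next
    (IH : ∀ Z' : Finset (T k), (Z'.card < k ∨ Z' = ∅) → ∀ v, v ∉ Z' → ∀ w, w ∉ Z' → Reach Z' v w)
    (hZ : Z.card ≤ k)
    {x y : T (k+1)} (hx : x ∉ Z) (hy : y ∉ Z)
    (hstep : y (Fin.last k) = x (Fin.last k) + 1) : Reach Z x y := by
  set c := x (Fin.last k) with hc
  by_cases hgood : (layerZ Z c).card < k ∨ layerZ Z c = ∅
  · by_cases hy' : (Fin.snoc (Fin.init y) c : T (k+1)) ∈ Z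
    · -- layer c is nonempty, so layer c+1 is small
      have h1 : Fin.init y ∈ layerZ Z c := mem_layerZ.2 hy'
      have hcard : (layerZ Z c).card ≥ 1 := Finset.card_pos.2 ⟨_, h1⟩
      have hsum := card_layerZ_add_le Z (fun h => add_one_ne c h.symm)
      have hgood' : (layerZ Z (c+1)).card < k ∨ layerZ Z (c+1) = ∅ := by
        left; omega
      obtain ⟨u, hu⟩ := exists_avoid Z hZ
      have r1 : Reach Z x (Fin.snoc u c) :=
        reach_within IH hgood x _ hx (hu c) rfl (Fin.snoc_last _ _)
      have r2 : Reach Z (Fin.snoc u c) (Fin.snoc u (c+1)) := by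
        have := cross_step (Z := Z) (x := Fin.snoc u c) (hu c)
        rw [Fin.snoc_last, update_last_snoc] at this
        exact this (hu (c+1))
      have r3 : Reach Z (Fin.snoc u (c+1)) y :=
        reach_within IH hgood' _ y (hu (c+1)) hy (Fin.snoc_last _ _) hstep
      exact (r1.trans r2).trans r3
    · have r1 : Reach Z x (Fin.snoc (Fin.init y) c) :=
        reach_within IH hgood x _ hx hy' rfl (Fin.snoc_last _ _)
      have r2 : Reach Z (Fin.snoc (Fin.init y) c) y := by
        have := cross_step (Z := Z) (x := Fin.snoc (Fin.init y) c) hy'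
        rw [Fin.snoc_last, update_last_snoc] at this
        have hyy : (Fin.snoc (Fin.init y) (c+1) : T (k+1)) = y := by
          rw [← hstep, Fin.snoc_init_self]
        rw [hyy] at this
        exact this hy
      exact r1.trans r2
  · push_neg at hgood
    have hall := all_last_eq_of_bad hZ hgood.1
    set x1 := Function.update x (Fin.last k) (c + 1) with hx1
    have hx1Z : x1 ∉ Z := by
      intro h
      have := hall x1 h
      rw [hx1, Function.update_self] at this
      exact add_one_ne c this
    have r1 : Reach Z x x1 := cross_step hx hx1Z
    have hempty : layerZ Z (c+1) = ∅ := by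
      rw [Finset.eq_empty_iff_forall_notMem]
      intro p hp
      have := hall _ (mem_layerZ.1 hp)
      rw [Fin.snoc_last] at this
      exact add_one_ne c this
    have r2 : Reach Z x1 y :=
      reach_within IH (Or.inr hempty) x1 y hx1Z hy
        (by rw [hx1, Function.update_self]) hstep
    exact r1.trans r2

lemma reach_up
    (IH : ∀ Z' : Finset (T k), (Z'.card < k ∨ Z' = ∅) → ∀ v, v ∉ Z' → ∀ w, w ∉ Z' → Reach Z' v w)
    (hZ : Z.card ≤ k) :
    ∀ (t : ℕ) (x y : T (k+1)), x ∉ Z → y ∉ Z →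
      y (Fin.last k) = x (Fin.last k) + ((t : ZMod 4) + 1) → Reach Z x y := by
  intro t
  induction t with
  | zero =>
    intro x y hx hy h
    exact reach_next IH hZ hx hy (by rw [h]; push_cast; ring)
  | succ t ih =>
    intro x y hx hy h
    obtain ⟨u, hu⟩ := exists_avoid Z hZ
    set m := (Fin.snoc u (x (Fin.last k) + ((t : ZMod 4) + 1)) : T (k+1)) with hm
    have hmZ : m ∉ Z := hu _
    have r1 : Reach Z x m := ih x m hx hmZ (by rw [hm, Fin.snoc_last])
    have r2 : Reach Z m y := by
      refine reach_next IH hZ hmZ hy ?_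
      rw [hm, Fin.snoc_last, h]
      push_cast
      ring
    exact r1.trans r2

end Reaching

lemma zmod4_cases : ∀ d : ZMod 4, d = 0 ∨ d = 1 ∨ d = 2 ∨ d = 3 := by decide

theorem torus_main : ∀ (k : ℕ) (Z : Finset (T k)), (Z.card < k ∨ Z = ∅) →
    ∀ v, v ∉ Z → ∀ w, w ∉ Z → Reach Z v w := by
  intro k
  induction k with
  | zero =>
    intro Z _ v _ w _
    have : v = w := funext fun i => i.elim0
    rw [this]
    exact Relation.ReflTransGen.refl
  | succ k IH =>
    intro Z hZ v hv w hw
    have hZle : Z.card ≤ k := by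
      rcases hZ with h | h
      · omega
      · simp [h]
    have key : ∀ t : ℕ, w (Fin.last k) = v (Fin.last k) + ((t : ZMod 4) + 1) →
        Reach Z v w := fun t h => reach_up IH hZle t v w hv hw h
    have hd : w (Fin.last k) = v (Fin.last k) + (w (Fin.last k) - v (Fin.last k)) := by ring
    have e3 : ((3 : ℕ) : ZMod 4) + 1 = 0 := by decide
    have e0 : ((0 : ℕ) : ZMod 4) + 1 = 1 := by decide
    have e1 : ((1 : ℕ) : ZMod 4) + 1 = 2 := by decide
    have e2 : ((2 : ℕ) : ZMod 4) + 1 = 3 := by decide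
    rcases zmod4_cases (w (Fin.last k) - v (Fin.last k)) with h | h | h | h
    · exact key 3 (by rw [e3, hd, h, add_zero])
    · exact key 0 (by rw [e0, hd, h])
    · exact key 1 (by rw [e1, hd, h])
    · exact key 2 (by rw [e2, hd, h])


def gray : ZMod 4 → Bool × Bool := fun a =>
  if a = 0 then (false, false) else if a = 1 then (false, true)
  else if a = 2 then (true, true) else (true, false)

def ungray : Bool × Bool → ZMod 4 := fun p =>
  if p = (false, false) then 0 else if p = (false, true) then 1
  else if p = (true, true) then 2 else 3

lemma ungray_gray : ∀ a : ZMod 4, ungray (gray a) = a := by decide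
lemma gray_ungray : ∀ p : Bool × Bool, gray (ungray p) = p := by decide

variable {k : ℕ}

def pidx (i : Fin (2 * k)) : Fin k := ⟨i.val / 2, by have := i.isLt; omega⟩
def idx0 (j : Fin k) : Fin (2 * k) := ⟨2 * j.val, by have := j.isLt; omega⟩
def idx1 (j : Fin k) : Fin (2 * k) := ⟨2 * j.val + 1, by have := j.isLt; omega⟩

lemma pidx_idx0 (j : Fin k) : pidx (idx0 j) = j := by
  apply Fin.ext; show 2 * j.val / 2 = j.val; omega
lemma pidx_idx1 (j : Fin k) : pidx (idx1 j) = j := by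
  apply Fin.ext; show (2 * j.val + 1) / 2 = j.val; omega

def emap (x : T k) : Fin (2 * k) → Bool := fun i =>
  if i.val % 2 = 0 then (gray (x (pidx i))).1 else (gray (x (pidx i))).2

def dmap (v : Fin (2 * k) → Bool) : T k := fun j => ungray (v (idx0 j), v (idx1 j))

instance stepDecidable {k : ℕ} (x y : T k) : Decidable (Step x y) :=
  decidable_of_iff (∃ j, y = Function.update x j (x j + 1)) Iff.rfl

lemma step_def {k : ℕ} {x y : T k} :
    Step x y ↔ ∃ j, y = Function.update x j (x j + 1) := Iff.rfl

lemma emap_idx0 (x : T k) (j : Fin k) : emap x (idx0 j) = (gray (x j)).1 := by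
  have h : (idx0 j).val % 2 = 0 := by show 2 * j.val % 2 = 0; omega
  simp only [emap, pidx_idx0, if_pos h]

lemma emap_idx1 (x : T k) (j : Fin k) : emap x (idx1 j) = (gray (x j)).2 := by
  have h : ¬ (idx1 j).val % 2 = 0 := by show ¬ (2 * j.val + 1) % 2 = 0; omega
  simp only [emap, pidx_idx1, if_neg h]

lemma dmap_emap (x : T k) : dmap (emap x) = x := by
  funext j
  simp only [dmap, emap_idx0, emap_idx1]
  exact ungray_gray (x j)

lemma idx0_pidx {i : Fin (2 * k)} (h : i.val % 2 = 0) : idx0 (pidx i) = i := by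
  apply Fin.ext; show 2 * (i.val / 2) = i.val; omega
lemma idx1_pidx {i : Fin (2 * k)} (h : i.val % 2 ≠ 0) : idx1 (pidx i) = i := by
  apply Fin.ext; show 2 * (i.val / 2) + 1 = i.val; omega

lemma emap_dmap (v : Fin (2 * k) → Bool) : emap (dmap v) = v := by
  funext i
  by_cases h : i.val % 2 = 0
  · rw [emap, if_pos h, dmap, gray_ungray]
    rw [idx0_pidx h]
  · rw [emap, if_neg h, dmap, gray_ungray]
    rw [idx1_pidx h]

lemma emap_injective : Function.Injective (emap (k := k)) :=
  Function.LeftInverse.injective dmap_emap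
lemma dmap_injective : Function.Injective (dmap (k := k)) :=
  Function.LeftInverse.injective emap_dmap

lemma step_iff {x y : T k} : Step x y ↔ ∃ j, y j = x j + 1 ∧ ∀ j', j' ≠ j → y j' = x j' := by
  constructor
  · rintro ⟨j, rfl⟩
    exact ⟨j, Function.update_self _ _ _, fun j' h => Function.update_of_ne h _ _⟩
  · rintro ⟨j, h1, h2⟩
    refine ⟨j, funext fun j' => ?_⟩
    by_cases h : j' = j
    · subst h; rw [Function.update_self]; exact h1
    · rw [Function.update_of_ne h]; exact h2 j' h

lemma zmod4_ne_add_one : ∀ a : ZMod 4, a ≠ a + 1 := by decide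
lemma zmod4_ne_add_two : ∀ a : ZMod 4, a ≠ a + 1 + 1 := by decide
lemma zmod4_ne_sub_one : ∀ a : ZMod 4, a - 1 ≠ a := by decide

lemma step_asymm {x y : T k} (h1 : Step x y) (h2 : Step y x) : False := by
  rw [step_iff] at h1 h2
  obtain ⟨j, hj, hoff⟩ := h1
  obtain ⟨j2, hj2, hoff2⟩ := h2
  by_cases h : j2 = j
  · subst h
    rw [hj] at hj2
    exact zmod4_ne_add_two (x j2) hj2
  · rw [hoff j2 h] at hj2
    exact zmod4_ne_add_one (x j2) hj2

lemma step_rev_iff {x z : T k} : Step z x ↔ ∃ j, z = Function.update x j (x j - 1) := by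
  constructor
  · rintro ⟨j, rfl⟩
    refine ⟨j, funext fun j' => ?_⟩
    by_cases h : j' = j
    · subst h; rw [Function.update_self, Function.update_self]; ring
    · rw [Function.update_of_ne h, Function.update_of_ne h]
  · rintro ⟨j, rfl⟩
    refine ⟨j, funext fun j' => ?_⟩
    by_cases h : j' = j
    · subst h; rw [Function.update_self, Function.update_self]; ring
    · rw [Function.update_of_ne h, Function.update_of_ne h]

lemma gray_succ : ∀ a : ZMod 4,
    ((gray a).1 = (gray (a+1)).1 ∧ (gray a).2 ≠ (gray (a+1)).2) ∨
    ((gray a).1 ≠ (gray (a+1)).1 ∧ (gray a).2 = (gray (a+1)).2) := by decide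

lemma ungray_diff : ∀ p q : Bool × Bool,
    (p.1 ≠ q.1 ∧ p.2 = q.2) ∨ (p.1 = q.1 ∧ p.2 ≠ q.2) →
    (ungray q = ungray p + 1 ∧ ¬ ungray p = ungray q + 1) ∨
    (ungray p = ungray q + 1 ∧ ¬ ungray q = ungray p + 1) := by decide

lemma idx0_ne_idx1 (j j' : Fin k) : idx0 j ≠ idx1 j' := by
  intro h
  have := congrArg Fin.val h
  simp only [idx0, idx1] at this
  omega

lemma emap_eq_of_pidx_ne {x y : T k} {i : Fin (2*k)} (h : x (pidx i) = y (pidx i)) :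
    emap x i = emap y i := by
  simp only [emap, h]

lemma step_adj {x y : T k} (h : Step x y) : (cube (2*k)).Adj (emap x) (emap y) := by
  obtain ⟨j, rfl⟩ := h
  show (Finset.univ.filter (fun i => emap x i ≠ emap _ i)).card = 1
  set y := Function.update x j (x j + 1) with hy
  have hyj : y j = x j + 1 := Function.update_self _ _ _
  have hoff : ∀ i : Fin (2*k), pidx i ≠ j → emap x i = emap y i := fun i hi =>
    emap_eq_of_pidx_ne (by rw [hy, Function.update_of_ne hi])
  have hmem : ∀ i : Fin (2*k), (emap x i ≠ emap y i) → i = idx0 j ∨ i = idx1 j := by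
    intro i hi
    have hp : pidx i = j := by
      by_contra hne
      exact hi (hoff i hne)
    by_cases hpar : i.val % 2 = 0
    · left; rw [← hp]; exact (idx0_pidx hpar).symm
    · right; rw [← hp]; exact (idx1_pidx hpar).symm
  have h0 : emap x (idx0 j) = (gray (x j)).1 := emap_idx0 x j
  have h0' : emap y (idx0 j) = (gray (x j + 1)).1 := by rw [emap_idx0, hyj]
  have h1 : emap x (idx1 j) = (gray (x j)).2 := emap_idx1 x j
  have h1' : emap y (idx1 j) = (gray (x j + 1)).2 := by rw [emap_idx1, hyj]
  rcases gray_succ (x j) with ⟨he, hne⟩ | ⟨hne, he⟩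
  · have : Finset.univ.filter (fun i => emap x i ≠ emap y i) = {idx1 j} := by
      apply Finset.ext
      intro i
      simp only [Finset.mem_filter, Finset.mem_univ, true_and, Finset.mem_singleton]
      constructor
      · intro hi
        rcases hmem i hi with h' | h'
        · exfalso; rw [h', h0, h0'] at hi; exact hi he
        · exact h'
      · intro h'
        rw [h', h1, h1']; exact hne
    rw [this, Finset.card_singleton]
  · have : Finset.univ.filter (fun i => emap x i ≠ emap y i) = {idx0 j} := by
      apply Finset.ext
      intro i
      simp only [Finset.mem_filter, Finset.mem_univ, true_and, Finset.mem_singleton]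
      constructor
      · intro hi
        rcases hmem i hi with h' | h'
        · exact h'
        · exfalso; rw [h', h1, h1'] at hi; exact hi he
      · intro h'
        rw [h', h0, h0']; exact hne
    rw [this, Finset.card_singleton]

lemma adj_step {v w : Fin (2*k) → Bool} (h : (cube (2*k)).Adj v w) :
    Step (dmap v) (dmap w) ∨ Step (dmap w) (dmap v) := by
  obtain ⟨istar, hstar⟩ := Finset.card_eq_one.1 h
  have hiff : ∀ i : Fin (2*k), v i ≠ w i ↔ i = istar := by
    intro i
    rw [← Finset.mem_singleton, ← hstar]
    simp only [Finset.mem_filter, Finset.mem_univ, true_and]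
  set j := pidx istar with hj
  have hoff : ∀ j' : Fin k, j' ≠ j → dmap v j' = dmap w j' := by
    intro j' hne
    have e0 : v (idx0 j') = w (idx0 j') := by
      by_contra hc
      exact hne (by rw [hj, ← (hiff _).1 hc, pidx_idx0])
    have e1 : v (idx1 j') = w (idx1 j') := by
      by_contra hc
      exact hne (by rw [hj, ← (hiff _).1 hc, pidx_idx1])
    simp only [dmap, e0, e1]
  have hstarval : istar = idx0 j ∨ istar = idx1 j := by
    by_cases hpar : istar.val % 2 = 0
    · left; rw [hj]; exact (idx0_pidx hpar).symm
    · right; rw [hj]; exact (idx1_pidx hpar).symm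
  set p := (v (idx0 j), v (idx1 j)) with hp
  set q := (w (idx0 j), w (idx1 j)) with hq
  have hdiff : (p.1 ≠ q.1 ∧ p.2 = q.2) ∨ (p.1 = q.1 ∧ p.2 ≠ q.2) := by
    rcases hstarval with hs | hs
    · left
      constructor
      · show v (idx0 j) ≠ w (idx0 j)
        rw [hiff]; exact hs.symm
      · show v (idx1 j) = w (idx1 j)
        by_contra hc
        have h2 := (hiff _).1 hc
        rw [hs] at h2
        exact idx0_ne_idx1 j j h2.symm
    · right
      constructor
      · show v (idx0 j) = w (idx0 j)
        by_contra hc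
        have h2 := (hiff _).1 hc
        rw [hs] at h2
        exact idx0_ne_idx1 j j h2
      · show v (idx1 j) ≠ w (idx1 j)
        rw [hiff]; exact hs.symm
  have hvj : dmap v j = ungray p := rfl
  have hwj : dmap w j = ungray q := rfl
  rcases ungray_diff p q hdiff with ⟨h1, _⟩ | ⟨h1, _⟩
  · left
    rw [step_iff]
    exact ⟨j, by rw [hvj, hwj, h1], fun j' hne => (hoff j' hne).symm⟩
  · right
    rw [step_iff]
    exact ⟨j, by rw [hwj, hvj, h1], fun j' hne => hoff j' hne⟩

lemma out_filter_eq (v : Fin (2*k) → Bool) :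
    (Finset.univ.filter (fun w => Step (dmap v) (dmap w))).card = k := by
  set x := dmap v with hx
  have himg : Finset.univ.filter (fun w => Step (dmap v) (dmap w))
      = Finset.image (fun j : Fin k => emap (Function.update x j (x j + 1))) Finset.univ := by
    apply Finset.ext
    intro w
    simp only [Finset.mem_filter, Finset.mem_univ, true_and, Finset.mem_image, step_def]
    constructor
    · rintro ⟨j, hj⟩
      exact ⟨j, by rw [← hj, emap_dmap]⟩
    · rintro ⟨j, rfl⟩
      exact ⟨j, by rw [dmap_emap]⟩
  rw [himg, Finset.card_image_of_injective _ ?_, Finset.card_univ, Fintype.card_fin]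
  intro j j' heq
  have h2 := emap_injective heq
  by_contra hne
  have h3 := congrFun h2 j
  rw [Function.update_self, Function.update_of_ne hne] at h3
  exact zmod4_ne_add_one (x j) h3.symm

lemma in_filter_eq (v : Fin (2*k) → Bool) :
    (Finset.univ.filter (fun w => Step (dmap w) (dmap v))).card = k := by
  set x := dmap v with hx
  have himg : Finset.univ.filter (fun w => Step (dmap w) (dmap v))
      = Finset.image (fun j : Fin k => emap (Function.update x j (x j - 1))) Finset.univ := by
    apply Finset.ext
    intro w
    simp only [Finset.mem_filter, Finset.mem_univ, true_and, Finset.mem_image, step_rev_iff, step_def]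
    constructor
    · rintro ⟨j, hj⟩
      exact ⟨j, by rw [← hj, emap_dmap]⟩
    · rintro ⟨j, rfl⟩
      exact ⟨j, by rw [dmap_emap]⟩
  rw [himg, Finset.card_image_of_injective _ ?_, Finset.card_univ, Fintype.card_fin]
  intro j j' heq
  have h2 := emap_injective heq
  by_contra hne
  have h3 := congrFun h2 j
  rw [Function.update_self, Function.update_of_ne hne] at h3
  exact zmod4_ne_sub_one (x j) h3


end Stmt3Aux

/-- For each `k ≥ 1` there exists an Eulerian orientation of the
hypercube `Q_{2k}` that is strongly `k`-vertex-connected. -/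
theorem stmt3 (k : ℕ) (hk : 1 ≤ k) :
    ∃ D : (Fin (2 * k) → Bool) → (Fin (2 * k) → Bool) → Bool,
      IsEulerianOrientation (cube (2 * k)) D ∧ StronglyKConnected k D := by
  classical
  open Stmt3Aux in
  refine ⟨fun v w => decide (Step (dmap v) (dmap w)), ⟨⟨?_, ?_⟩, ?_⟩, ?_, ?_⟩
  · -- arcs are edges
    intro v w h
    rw [decide_eq_true_eq] at h
    have := step_adj h
    rwa [emap_dmap, emap_dmap] at this
  · -- each edge gets exactly one direction
    intro v w hadj
    rcases adj_step hadj with hs | hs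
    · have h1 : decide (Step (dmap v) (dmap w)) = true := decide_eq_true hs
      have h2 : decide (Step (dmap w) (dmap v)) = false :=
        decide_eq_false (fun hc => step_asymm hs hc)
      simp [h1, h2]
    · have h1 : decide (Step (dmap w) (dmap v)) = true := decide_eq_true hs
      have h2 : decide (Step (dmap v) (dmap w)) = false :=
        decide_eq_false (fun hc => step_asymm hc hs)
      simp [h1, h2]
  · -- Eulerian: in-degree = out-degree
    intro v
    have hout : outDeg (fun v w => decide (Step (dmap v) (dmap w))) v = k := by
      rw [outDeg]
      have he : Finset.univ.filter (fun w => decide (Step (dmap v) (dmap w)) = true)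
          = Finset.univ.filter (fun w => Step (dmap v) (dmap w)) := by
        apply Finset.filter_congr
        intro w _
        simp
      rw [he, out_filter_eq]
    have hin : inDeg (fun v w => decide (Step (dmap v) (dmap w))) v = k := by
      rw [inDeg]
      have he : Finset.univ.filter (fun w => decide (Step (dmap w) (dmap v)) = true)
          = Finset.univ.filter (fun w => Step (dmap w) (dmap v)) := by
        apply Finset.filter_congr
        intro w _
        simp
      rw [he, in_filter_eq]
    rw [hout, hin]
  · -- enough vertices
    have h1 : Fintype.card (Fin (2 * k) → Bool) = 2 ^ (2 * k) := by
      simp [Fintype.card_fun]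
    have h2 : (2 : ℕ) ^ (2 * k) = 4 ^ k := by
      rw [pow_mul]
      norm_num
    have h3 : k < 4 ^ k := Nat.lt_pow_self (by norm_num : 1 < 4)
    omega
  · -- deleting ≤ k-1 vertices leaves it strongly connected
    intro Z hZ v hv w hw
    set Z' := Z.image dmap with hZ'def
    have hZ' : Z'.card < k := by
      calc Z'.card ≤ Z.card := Finset.card_image_le
      _ ≤ k - 1 := hZ
      _ < k := Nat.sub_lt hk one_pos
    have hmem : ∀ u : Fin (2 * k) → Bool, u ∈ Finset.univ \ Z → dmap u ∉ Z' := by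
      intro u hu hc
      obtain ⟨u', hu', he⟩ := Finset.mem_image.1 hc
      have : u' = u := dmap_injective he
      subst this
      rw [Finset.mem_sdiff] at hu
      exact hu.2 hu'
    have hmem' : ∀ a : T k, a ∉ Z' → emap a ∈ Finset.univ \ Z := by
      intro a ha
      rw [Finset.mem_sdiff]
      refine ⟨Finset.mem_univ _, fun hc => ha ?_⟩
      exact Finset.mem_image.2 ⟨emap a, hc, dmap_emap a⟩
    have hreach := torus_main k Z' (Or.inl hZ') (dmap v) (hmem v hv) (dmap w) (hmem w hw)
    have hlift := Relation.ReflTransGen.lift (r := fun a b => a ∉ Z' ∧ b ∉ Z' ∧ Step a b)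
      (p := fun a b => a ∈ Finset.univ \ Z ∧ b ∈ Finset.univ \ Z ∧
        decide (Step (dmap a) (dmap b)) = true) emap ?_ _ _ hreach
    · rwa [Function.onFun, emap_dmap, emap_dmap] at hlift
    · rintro a b ⟨ha, hb, hstep⟩
      refine ⟨hmem' a ha, hmem' b hb, decide_eq_true ?_⟩
      rwa [dmap_emap, dmap_emap]
end

section
/- Let 1 ≤ r ≤ 2k and let M' be the set of the first m' elements in colexicographic order among the r-element subsets of {1,…,2k}, where r ≥ k+1 and m' ≥ 1. Then the lower shadow ∂M' (the set of (r−1)-subsets contained in some member of M') satisfies |∂M'| > |M'|. -/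
open Finset

variable {V : Type*} [Fintype V] [DecidableEq V]

/-- If `M'` is an initial segment in colex order of the `r`-subsets of
`{1,…,2k}` with `r ≥ k+1` and `|M'| = m' ≥ 1`, then the lower shadow of `M'` is
strictly larger than `M'`. -/
theorem stmt10 (k r m' : ℕ) (hk : 1 ≤ k) (hr : k + 1 ≤ r) (hr2 : r ≤ 2 * k)
    (hm' : 1 ≤ m') (M' : Finset (Finset (Fin (2 * k))))
    (hcard : ∀ A ∈ M', A.card = r) (hsize : M'.card = m')
    (hinit : ∀ A ∈ M', ∀ B : Finset (Fin (2 * k)), B.card = r →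
      toColex B ≤ toColex A → B ∈ M') :
    M'.card < M'.shadow.card := by
  have hlym := Finset.card_mul_le_card_shadow_mul (𝒜 := M') (r := r) hcard
  rw [Fintype.card_fin] at hlym
  by_contra hle
  push_neg at hle
  have h1 : M'.card * r ≤ M'.card * (2 * k - r + 1) :=
    hlym.trans (Nat.mul_le_mul_right _ hle)
  have hpos : 0 < M'.card := by omega
  have h2 : r ≤ 2 * k - r + 1 := Nat.le_of_mul_le_mul_left
    (by simpa [Nat.mul_comm] using h1) hpos
  omega
end
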